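/- Let a and b be real quaternions satisfying a² = −1, b² = −1, and (a·b)² = −1. Then there exists a nonzero quaternion q such that q·a·q⁻¹ = i and q·b·q⁻¹ = j, where i and j are the standard imaginary quaternion units. -/

import Mathlib

/-- Auxiliary identity: the sum of the four "projection" candidates, suitably
rotated back, equals `4`, so they cannot all vanish. -/
lemma stmt8_sum_aux (u v w : Quaternion ℝ) :
    letI I : Quaternion ℝ := ⟨0,1,0,0⟩
    letI J : Quaternion ℝ := ⟨0,0,1,0⟩
    letI K : Quaternion ℝ := ⟨0,0,0,1⟩
    (1 - I*u - J*v - K*w) - I*(I - I*(I*u) - J*(I*v) - K*(I*w))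
      - J*(J - I*(J*u) - J*(J*v) - K*(J*w))
      - K*(K - I*(K*u) - J*(K*v) - K*(K*w)) = 4 := by
  have h4 : (4 : Quaternion ℝ) = ⟨4,0,0,0⟩ := rfl
  rw [h4]
  set I : Quaternion ℝ := ⟨0,1,0,0⟩ with hI
  set J : Quaternion ℝ := ⟨0,0,1,0⟩ with hJ
  set K : Quaternion ℝ := ⟨0,0,0,1⟩ with hK
  ext <;> simp <;> simp [hI, hJ, hK, Quaternion.re_one, Quaternion.imI_one, Quaternion.imJ_one, Quaternion.imK_one] <;> ring

/-- If `a`, `b` are real quaternions with `a² = −1`, `b² = −1` and `(a·b)² = −1`,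
then the pair `(a, b)` is conjugate to the standard pair `(i, j)`: there is a
nonzero quaternion `q` with `q·a·q⁻¹ = i` and `q·b·q⁻¹ = j`. -/
theorem stmt8 (a b : Quaternion ℝ)
    (ha : a ^ 2 = -1) (hb : b ^ 2 = -1) (hab : (a * b) ^ 2 = -1) :
    ∃ q : Quaternion ℝ, q ≠ 0 ∧
      q * a * q⁻¹ = (⟨0, 1, 0, 0⟩ : Quaternion ℝ) ∧
      q * b * q⁻¹ = (⟨0, 0, 1, 0⟩ : Quaternion ℝ) := by
  set I : Quaternion ℝ := ⟨0,1,0,0⟩ with hI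
  set J : Quaternion ℝ := ⟨0,0,1,0⟩ with hJ
  set K : Quaternion ℝ := ⟨0,0,0,1⟩ with hK
  have hii : I * I = -1 := by ext <;> simp <;> simp [hI, Quaternion.re_one, Quaternion.imI_one, Quaternion.imJ_one, Quaternion.imK_one]
  have hjj : J * J = -1 := by ext <;> simp <;> simp [hJ, Quaternion.re_one, Quaternion.imI_one, Quaternion.imJ_one, Quaternion.imK_one]
  have hij : I * J = K := by ext <;> simp <;> simp [hI, hJ, hK]
  have hji : J * I = -K := by ext <;> simp <;> simp [hI, hJ, hK]
  have hik : I * K = -J := by ext <;> simp <;> simp [hI, hJ, hK]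
  have hjk : J * K = I := by ext <;> simp <;> simp [hI, hJ, hK]
  have h1 : a * a = -1 := by rw [← pow_two]; exact ha
  have h2 : b * b = -1 := by rw [← pow_two]; exact hb
  have hbb : b * (-b) = 1 := by rw [mul_neg, h2]; norm_num
  have h4 : a * b * a = b := by
    have h := hab
    rw [pow_two] at h
    calc a * b * a = a * b * a * (b * (-b)) := by rw [hbb, mul_one]
      _ = (a * b * (a * b)) * (-b) := by noncomm_ring
      _ = (-1 : Quaternion ℝ) * (-b) := by rw [h]
      _ = b := by noncomm_ring
  have h3 : b * a = -(a * b) := by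
    have h' : (a * a) * (b * a) = a * b := by
      calc (a * a) * (b * a) = a * (a * b * a) := by noncomm_ring
        _ = a * b := by rw [h4]
    rw [h1, neg_one_mul] at h'
    rw [← h', neg_neg]
  set Q : Quaternion ℝ → Quaternion ℝ :=
    fun x => x - I * (x * a) - J * (x * b) - K * (x * (a * b)) with hQ
  have keyA : ∀ x : Quaternion ℝ, Q x * a = I * Q x := by
    intro x
    simp only [hQ]
    calc (x - I * (x * a) - J * (x * b) - K * (x * (a * b))) * a
        = x * a - I * (x * (a * a)) - J * (x * (b * a)) - K * (x * (a * b * a)) := by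
          noncomm_ring
      _ = x * a - I * (x * (-1)) - J * (x * (-(a*b))) - K * (x * b) := by rw [h1, h3, h4]
      _ = I * x - (I*I) * (x * a) - (I*J) * (x * b) - (I*K) * (x * (a*b)) := by
          rw [hii, hij, hik]; noncomm_ring
      _ = I * (x - I * (x * a) - J * (x * b) - K * (x * (a * b))) := by noncomm_ring
  have keyB : ∀ x : Quaternion ℝ, Q x * b = J * Q x := by
    intro x
    simp only [hQ]
    calc (x - I * (x * a) - J * (x * b) - K * (x * (a * b))) * b
        = x * b - I * (x * (a * b)) - J * (x * (b * b)) - K * (x * (a * (b * b))) := by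
          noncomm_ring
      _ = x * b - I * (x * (a * b)) - J * (x * (-1)) - K * (x * (a * (-1))) := by rw [h2]
      _ = J * x - (J*I) * (x * a) - (J*J) * (x * b) - (J*K) * (x * (a*b)) := by
          rw [hji, hjj, hjk]; noncomm_ring
      _ = J * (x - I * (x * a) - J * (x * b) - K * (x * (a * b))) := by noncomm_ring
  have hsum : Q 1 - I * Q I - J * Q J - K * Q K = 4 := by
    simp only [hQ, one_mul]
    exact stmt8_sum_aux a b (a * b)
  have hx : Q 1 ≠ 0 ∨ Q I ≠ 0 ∨ Q J ≠ 0 ∨ Q K ≠ 0 := by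
    by_contra h
    push_neg at h
    obtain ⟨e0, e1, e2, e3⟩ := h
    rw [e0, e1, e2, e3] at hsum
    have h40 : (4 : Quaternion ℝ) = ⟨4,0,0,0⟩ := rfl
    simp [h40, Quaternion.ext_iff] at hsum
    have := congrArg (fun x : Quaternion ℝ => x.re) hsum
    norm_num [Quaternion.re_zero] at this
  have final : ∀ x : Quaternion ℝ, Q x ≠ 0 →
      ∃ q : Quaternion ℝ, q ≠ 0 ∧ q * a * q⁻¹ = I ∧ q * b * q⁻¹ = J := by
    intro x hx
    refine ⟨Q x, hx, ?_, ?_⟩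
    · rw [keyA x, mul_assoc, mul_inv_cancel₀ hx, mul_one]
    · rw [keyB x, mul_assoc, mul_inv_cancel₀ hx, mul_one]
  rcases hx with h | h | h | h
  exacts [final _ h, final _ h, final _ h, final _ h]
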